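/- Let λ1, λ2 > 0, let k, l ≥ 1 be integers, and let Δt ≥ 0. Let X and Y be independent real random variables, where X has the Gamma distribution with shape k and rate λ1 and Y has the Gamma distribution with shape l and rate λ2. Then E[|X + Δt − Y|] = (k/λ1 − l/λ2 + Δt)·(1 − 2e^{−λ2·Δt}·Σ_{j=0}^{l−1} (λ2·Δt)^j/j!) + 2e^{−λ2·Δt}·[ Σ_{i=0}^{k−1} Σ_{j=0}^{l−1} C(i+j, i) · ((λ2·Δt)^{l−1−j}/(l−1−j)!) · ((k − i)·λ1^{i−1}·λ2^{j+1}/(λ1 + λ2)^{i+j+1}) + Δt·(λ2·Δt)^{l−1}/(l−1)! ]. -/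

import Mathlib

open MeasureTheory ProbabilityTheory Real Set Filter Topology
open scoped NNReal ENNReal

namespace GammaAbsAux

lemma integrableOn_pow_mul_exp {c : ℝ} (hc : 0 < c) (n : ℕ) (b : ℝ) :
    IntegrableOn (fun x : ℝ => x ^ n * Real.exp (-(c * x))) (Ioi b) := by
  apply integrable_of_isBigO_exp_neg (b := c / 2) (half_pos hc)
  · exact (Continuous.continuousOn (by continuity))
  · have ht : Tendsto (fun x : ℝ => x ^ n * Real.exp (-(c / 2 * x))) atTop (𝓝 0) := by
      have h2 : Tendsto (fun x : ℝ => c / 2 * x) atTop atTop :=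
        Tendsto.const_mul_atTop (half_pos hc) tendsto_id
      have := (tendsto_pow_mul_exp_neg_atTop_nhds_zero n).comp h2
      have h3 : Tendsto (fun x : ℝ => (c / 2 * x) ^ n * Real.exp (-(c / 2 * x)) * (2 / c) ^ n)
          atTop (𝓝 (0 * (2 / c) ^ n)) := this.mul_const _
      rw [zero_mul] at h3
      refine h3.congr' ?_
      filter_upwards [eventually_gt_atTop 0] with x hx
      field_simp
      rw [← mul_pow]; field_simp
    rw [Asymptotics.isBigO_iff]
    refine ⟨1, ?_⟩
    filter_upwards [ht.eventually (eventually_le_nhds (by norm_num : (0:ℝ) < 1)),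
      eventually_ge_atTop 0] with x h1 h0
    have hxn : (0:ℝ) ≤ x ^ n := pow_nonneg h0 n
    have : x ^ n * Real.exp (-(c * x)) = (x ^ n * Real.exp (-(c / 2 * x))) *
        Real.exp (-(c / 2 * x)) := by
      rw [mul_assoc, ← Real.exp_add]; ring_nf
    rw [Real.norm_eq_abs, Real.norm_eq_abs, this, abs_mul]
    have h1' : |x ^ n * Real.exp (-(c / 2 * x))| ≤ 1 := by
      rwa [abs_of_nonneg (by positivity)]
    calc |x ^ n * Real.exp (-(c / 2 * x))| * |Real.exp (-(c / 2 * x))|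
        ≤ 1 * |Real.exp (-(c / 2 * x))| := by gcongr
      _ = 1 * |Real.exp (-(c / 2) * x)| := by ring_nf

/-- FTC tail formula for `∫_{b}^∞ x^n e^{-cx}`. -/
lemma tail_eq {c : ℝ} (hc : 0 < c) (n : ℕ) (b : ℝ) :
    ∫ x in Ioi b, x ^ n * Real.exp (-(c * x)) =
      Real.exp (-(c * b)) *
        ∑ m ∈ Finset.range (n + 1),
          ((n.factorial : ℝ) / (m.factorial : ℝ)) * b ^ m * c ^ m / c ^ (n + 1) := by
  induction n generalizing b with
  | zero =>
      have hF : ∀ x ∈ Ioi b, HasDerivAt (fun x : ℝ => -Real.exp (-(c * x)) / c)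
          (x ^ 0 * Real.exp (-(c * x))) x := by
        intro x _
        have : HasDerivAt (fun x : ℝ => -(c * x)) (-c) x := by
          have := ((hasDerivAt_id x).const_mul c).neg; simp only [mul_one] at this; exact this
        have := (this.exp).neg.div_const c
        refine this.congr_deriv ?_
        field_simp
      have hT : Tendsto (fun x : ℝ => -Real.exp (-(c * x)) / c) atTop (𝓝 0) := by
        have : Tendsto (fun x : ℝ => Real.exp (-(c * x))) atTop (𝓝 0) := by
          have h2 : Tendsto (fun x : ℝ => -(c * x)) atTop atBot :=
            tendsto_neg_atTop_atBot.comp (Tendsto.const_mul_atTop hc tendsto_id)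
          exact Real.tendsto_exp_atBot.comp h2
        simpa using (this.neg).div_const c
      have := integral_Ioi_of_hasDerivAt_of_tendsto
        (Continuous.continuousWithinAt (by continuity)) hF
        (integrableOn_pow_mul_exp hc 0 b) hT
      rw [this]
      simp
      ring
  | succ n ih =>
      -- integration by parts step
      have hF : ∀ x ∈ Ioi b, HasDerivAt (fun x : ℝ => -x ^ (n+1) * Real.exp (-(c * x)) / c)
          (x ^ (n+1) * Real.exp (-(c * x))
            - ((n+1 : ℝ) / c) * (x ^ n * Real.exp (-(c * x)))) x := by
        intro x _
        have h1 : HasDerivAt (fun x : ℝ => x ^ (n+1)) ((n+1 : ℝ) * x ^ n) x := by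
          simpa using hasDerivAt_pow (n+1) x
        have h2 : HasDerivAt (fun x : ℝ => Real.exp (-(c * x))) (-c * Real.exp (-(c * x))) x := by
          have : HasDerivAt (fun x : ℝ => -(c * x)) (-c) x := by
            have := ((hasDerivAt_id x).const_mul c).neg; simp only [mul_one] at this; exact this
          simpa [mul_comm] using this.exp
        have := ((h1.mul h2).neg).div_const c
        have hcne : c ≠ 0 := hc.ne'
        refine (this.congr_of_eventuallyEq (Filter.Eventually.of_forall fun y => ?_)).congr_deriv ?_
        · simp
        · field_simp
          ring
      have hT : Tendsto (fun x : ℝ => -x ^ (n+1) * Real.exp (-(c * x)) / c) atTop (𝓝 0) := by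
        have h2 : Tendsto (fun x : ℝ => c * x) atTop atTop :=
          Tendsto.const_mul_atTop hc tendsto_id
        have h3 := (tendsto_pow_mul_exp_neg_atTop_nhds_zero (n+1)).comp h2
        have h4 : Tendsto (fun x : ℝ => (c * x) ^ (n+1) * Real.exp (-(c * x)) *
            (-(1 / c ^ (n+1)) / c)) atTop (𝓝 (0 * (-(1 / c ^ (n+1)) / c))) := h3.mul_const _
        rw [zero_mul] at h4
        refine h4.congr' ?_
        filter_upwards [eventually_gt_atTop 0] with x hx
        field_simp
        ring
      have hInt : IntegrableOn (fun x : ℝ => x ^ (n+1) * Real.exp (-(c * x))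
          - ((n+1 : ℝ) / c) * (x ^ n * Real.exp (-(c * x)))) (Ioi b) :=
        (integrableOn_pow_mul_exp hc (n+1) b).sub
          ((integrableOn_pow_mul_exp hc n b).const_mul _)
      have key := integral_Ioi_of_hasDerivAt_of_tendsto
        (Continuous.continuousWithinAt (by continuity)) hF hInt hT
      rw [integral_sub (integrableOn_pow_mul_exp hc (n+1) b)
        ((integrableOn_pow_mul_exp hc n b).const_mul _), MeasureTheory.integral_const_mul, ih] at key
      have hstep : ∫ x in Ioi b, x ^ (n+1) * Real.exp (-(c * x)) =
          ((n+1 : ℝ) / c) * (Real.exp (-(c * b)) *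
            ∑ m ∈ Finset.range (n + 1),
              ((n.factorial : ℝ) / (m.factorial : ℝ)) * b ^ m * c ^ m / c ^ (n + 1))
          + b ^ (n+1) * Real.exp (-(c * b)) / c := by
        rw [sub_eq_iff_eq_add] at key
        rw [key]; ring
      have hcne : c ≠ 0 := hc.ne'
      rw [hstep]
      conv_rhs => rw [Finset.sum_range_succ]
      rw [mul_add]
      congr 1
      · simp only [Finset.mul_sum]
        apply Finset.sum_congr rfl
        intro m hm
        have hfac : ((n+1).factorial : ℝ) = (n+1 : ℝ) * (n.factorial : ℝ) := by
          rw [Nat.factorial_succ]; push_cast; ring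
        rw [hfac]
        have hm' : (m.factorial : ℝ) ≠ 0 := Nat.cast_ne_zero.mpr (Nat.factorial_ne_zero m)
        field_simp
        ring
      · have hne : (((n+1).factorial : ℝ)) ≠ 0 := Nat.cast_ne_zero.mpr (Nat.factorial_ne_zero _)
        field_simp
        ring

lemma moment0 {c : ℝ} (hc : 0 < c) (n : ℕ) :
    ∫ x in Ioi (0:ℝ), x ^ n * Real.exp (-(c * x)) = (n.factorial : ℝ) / c ^ (n + 1) := by
  rw [tail_eq hc n 0]
  rw [Finset.sum_eq_single 0]
  · simp
  · intro m _ hm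
    simp [zero_pow hm]
  · intro h; simp at h


/-- Real density of the Erlang distribution with shape `k'+1`. -/
noncomputable def den (k' : ℕ) (lam : ℝ) (x : ℝ) : ℝ :=
  lam ^ (k' + 1) * x ^ k' * Real.exp (-(lam * x)) / (k'.factorial : ℝ)

lemma measurable_den (k' : ℕ) (lam : ℝ) : Measurable (den k' lam) := by
  unfold den; fun_prop

lemma den_nonneg {k' : ℕ} {lam : ℝ} (hlam : 0 < lam) {x : ℝ} (hx : 0 ≤ x) :
    0 ≤ den k' lam x := by
  unfold den; positivity

lemma gammaPDFReal_eq_den {k' : ℕ} {lam : ℝ} {x : ℝ} (hx : 0 ≤ x) :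
    gammaPDFReal ((k' + 1 : ℕ) : ℝ) lam x = den k' lam x := by
  unfold gammaPDFReal den
  rw [if_pos hx]
  have h1 : ((k' + 1 : ℕ) : ℝ) = (k' : ℝ) + 1 := by push_cast; ring
  rw [h1, Real.Gamma_nat_eq_factorial]
  have h2 : (k' : ℝ) + 1 - 1 = (k' : ℝ) := by ring
  rw [h2]
  rw [show lam ^ ((k' : ℝ) + 1) = lam ^ ((k' + 1 : ℕ) : ℝ) by rw [h1],
    Real.rpow_natCast, Real.rpow_natCast]
  ring

lemma ae_ne_zero : ∀ᵐ x : ℝ ∂(volume : Measure ℝ), x ≠ 0 := by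
  rw [ae_iff]
  have : {x : ℝ | ¬ x ≠ 0} = {0} := by ext x; simp
  rw [this]
  simp

lemma mul_pdf_ae_eq {k' : ℕ} {lam : ℝ} (hlam : 0 < lam) (f : ℝ → ℝ) :
    (fun x => f x * gammaPDFReal ((k' + 1 : ℕ) : ℝ) lam x) =ᵐ[(volume : Measure ℝ)]
      (Ioi (0:ℝ)).indicator (fun x => f x * den k' lam x) := by
  filter_upwards [ae_ne_zero] with x hx
  rcases lt_or_gt_of_ne hx with h | h
  · rw [Set.indicator_of_notMem (by simp [h.not_gt] : x ∉ Ioi (0:ℝ))]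
    simp only [gammaPDFReal, if_neg (not_le.mpr h), mul_zero]
  · rw [Set.indicator_of_mem (by exact h : x ∈ Ioi (0:ℝ)),
      gammaPDFReal_eq_den h.le]

lemma integral_gamma {k' : ℕ} {lam : ℝ} (hlam : 0 < lam) (f : ℝ → ℝ) :
    ∫ x, f x ∂(gammaMeasure ((k' + 1 : ℕ) : ℝ) lam) =
      ∫ x in Ioi (0:ℝ), f x * den k' lam x := by
  rw [gammaMeasure]
  have hrw : (gammaPDF ((k' + 1 : ℕ) : ℝ) lam) =
      fun x => ((Real.toNNReal (gammaPDFReal ((k' + 1 : ℕ) : ℝ) lam x) : ℝ≥0) : ENNReal) := rfl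
  rw [hrw]
  rw [integral_withDensity_eq_integral_smul
    ((measurable_gammaPDFReal _ _).real_toNNReal) f]
  rw [← integral_indicator measurableSet_Ioi]
  apply integral_congr_ae
  refine (Filter.EventuallyEq.trans ?_ (mul_pdf_ae_eq hlam f))
  filter_upwards with x
  rw [NNReal.smul_def, smul_eq_mul,
    Real.coe_toNNReal _ (gammaPDFReal_nonneg (by positivity) hlam x)]
  ring

lemma measurable_gammaPDF (a r : ℝ) : Measurable (gammaPDF a r) :=
  (measurable_gammaPDFReal a r).ennreal_ofReal

lemma integrable_gamma_iff {k' : ℕ} {lam : ℝ} (hlam : 0 < lam) (f : ℝ → ℝ) :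
    Integrable f (gammaMeasure ((k' + 1 : ℕ) : ℝ) lam) ↔
      IntegrableOn (fun x => f x * den k' lam x) (Ioi (0:ℝ)) := by
  rw [gammaMeasure]
  rw [integrable_withDensity_iff (measurable_gammaPDF _ _)
    (by filter_upwards with x using ENNReal.ofReal_lt_top)]
  have : (fun x => f x * (gammaPDF ((k' + 1 : ℕ) : ℝ) lam x).toReal)
      =ᵐ[(volume : Measure ℝ)] (Ioi (0:ℝ)).indicator (fun x => f x * den k' lam x) := by
    refine (Filter.EventuallyEq.trans ?_ (mul_pdf_ae_eq hlam f))
    filter_upwards with x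
    rw [gammaPDF, ENNReal.toReal_ofReal (gammaPDFReal_nonneg (by positivity) hlam x)]
  rw [integrable_congr this, integrable_indicator_iff measurableSet_Ioi]

lemma gamma_ae_pos {k' : ℕ} {lam : ℝ} (hlam : 0 < lam) :
    ∀ᵐ y ∂(gammaMeasure ((k' + 1 : ℕ) : ℝ) lam), 0 < y := by
  rw [ae_iff]
  have h1 : {y : ℝ | ¬ 0 < y} = Iic 0 := by ext y; simp
  rw [h1, gammaMeasure, withDensity_apply _ measurableSet_Iic]
  rw [setLIntegral_congr (Filter.EventuallyEq.symm Iio_ae_eq_Iic)]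
  exact lintegral_gammaPDF_of_nonpos le_rfl


section Moments

variable {k' : ℕ} {lam : ℝ}

lemma integrableOn_pow_den (hlam : 0 < lam) (n : ℕ) (b : ℝ) :
    IntegrableOn (fun x => x ^ n * den k' lam x) (Ioi b) := by
  have h := (integrableOn_pow_mul_exp hlam (k' + n) b).const_mul
    (lam ^ (k' + 1) / (k'.factorial : ℝ))
  refine MeasureTheory.IntegrableOn.congr_fun h (fun x _ => ?_) measurableSet_Ioi
  unfold den
  rw [pow_add]
  ring

lemma setIntegral_pow_den (hlam : 0 < lam) (n : ℕ) :
    ∫ x in Ioi (0:ℝ), x ^ n * den k' lam x =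
      ((k' + n).factorial : ℝ) / ((k'.factorial : ℝ) * lam ^ n) := by
  have h1 : ∫ x in Ioi (0:ℝ), x ^ n * den k' lam x =
      ∫ x in Ioi (0:ℝ), (lam ^ (k' + 1) / (k'.factorial : ℝ)) *
        (x ^ (k' + n) * Real.exp (-(lam * x))) := by
    refine setIntegral_congr_fun measurableSet_Ioi (fun x _ => ?_)
    unfold den
    rw [pow_add]
    ring
  rw [h1, MeasureTheory.integral_const_mul, moment0 hlam]
  have hk : (k'.factorial : ℝ) ≠ 0 := Nat.cast_ne_zero.mpr (Nat.factorial_ne_zero _)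
  have hcne : lam ≠ 0 := hlam.ne'
  rw [show k' + n + 1 = (k' + 1) + n by ring, pow_add]
  field_simp
  ring

/-- The function `b ↦ E[(X-b)⁺]` for the Erlang distribution of shape `k'+1`. -/
noncomputable def phi (k' : ℕ) (lam b : ℝ) : ℝ :=
  (1 / lam) * Real.exp (-(lam * b)) *
    ∑ i ∈ Finset.range (k' + 1), ((k' : ℝ) + 1 - (i : ℝ)) * (lam * b) ^ i / (i.factorial : ℝ)

lemma measurable_phi (k' : ℕ) (lam : ℝ) : Measurable (phi k' lam) := by
  unfold phi; fun_prop

lemma setIntegral_max_den (hlam : 0 < lam) {b : ℝ} (hb : 0 ≤ b) :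
    ∫ x in Ioi (0:ℝ), max (x - b) 0 * den k' lam x = phi k' lam b := by
  have hsplit : Ioc (0:ℝ) b ∪ Ioi b = Ioi 0 := Ioc_union_Ioi_eq_Ioi hb
  have hg : IntegrableOn (fun x : ℝ => x ^ 1 * den k' lam x + x ^ 0 * den k' lam x)
      (Ioc (0:ℝ) b) := by
    refine MeasureTheory.IntegrableOn.mono_set ?_ Ioc_subset_Ioi_self
    exact (integrableOn_pow_den (k' := k') hlam 1 0).add
      (integrableOn_pow_den (k' := k') hlam 0 0)
  have hint1 : IntegrableOn (fun x => max (x - b) 0 * den k' lam x) (Ioc (0:ℝ) b) := by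
    refine MeasureTheory.Integrable.mono' hg
      (((measurable_id.sub_const b).max measurable_const).mul
        (measurable_den k' lam)).aestronglyMeasurable ?_
    rw [ae_restrict_iff' measurableSet_Ioc]
    filter_upwards with x hx
    have hx0 : (0:ℝ) < x := hx.1
    have hden : 0 ≤ den k' lam x := den_nonneg hlam hx0.le
    rw [Real.norm_eq_abs, abs_mul, abs_of_nonneg hden, abs_of_nonneg (le_max_right _ _)]
    have h1 : max (x - b) 0 ≤ x ^ 1 + x ^ 0 := by
      rw [pow_one, pow_zero]
      rcases le_total (x - b) 0 with h | h
      · rw [max_eq_right h]; positivity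
      · rw [max_eq_left h]; nlinarith
    calc max (x - b) 0 * den k' lam x ≤ (x ^ 1 + x ^ 0) * den k' lam x := by gcongr
      _ = x ^ 1 * den k' lam x + x ^ 0 * den k' lam x := by ring
  have hint2 : IntegrableOn (fun x => (x - b) * den k' lam x) (Ioi b) := by
    have h := (integrableOn_pow_den (k' := k') hlam 1 b).sub
      ((integrableOn_pow_den (k' := k') hlam 0 b).const_mul b)
    refine MeasureTheory.IntegrableOn.congr_fun h (fun x _ => ?_) measurableSet_Ioi
    simp only [Pi.sub_apply]
    ring
  have heq : EqOn (fun x => max (x - b) 0 * den k' lam x)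
      (fun x => (x - b) * den k' lam x) (Ioi b) := by
    intro x hx
    simp only [mem_Ioi] at hx
    dsimp only
    rw [max_eq_left (by linarith : (0:ℝ) ≤ x - b)]
  have hint2' : IntegrableOn (fun x => max (x - b) 0 * den k' lam x) (Ioi b) :=
    MeasureTheory.IntegrableOn.congr_fun hint2 (fun x hx => (heq hx).symm) measurableSet_Ioi
  rw [← hsplit, setIntegral_union (Ioc_disjoint_Ioi le_rfl) measurableSet_Ioi hint1 hint2']
  have hzero : ∫ x in Ioc (0:ℝ) b, max (x - b) 0 * den k' lam x = 0 := by
    have h0 : EqOn (fun x => max (x - b) 0 * den k' lam x) (fun _ => (0:ℝ)) (Ioc (0:ℝ) b) := by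
      intro x hx
      dsimp only
      rw [max_eq_right (by linarith [hx.2] : x - b ≤ 0), zero_mul]
    rw [setIntegral_congr_fun measurableSet_Ioc h0, integral_zero]
  rw [hzero, zero_add, setIntegral_congr_fun measurableSet_Ioi heq]
  -- expand (x-b)*den into two tail integrals
  have hexp : ∫ x in Ioi b, (x - b) * den k' lam x =
      (lam ^ (k' + 1) / (k'.factorial : ℝ)) *
        (∫ x in Ioi b, x ^ (k' + 1) * Real.exp (-(lam * x)))
      - b * ((lam ^ (k' + 1) / (k'.factorial : ℝ)) *
          (∫ x in Ioi b, x ^ k' * Real.exp (-(lam * x)))) := by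
    rw [← MeasureTheory.integral_const_mul, ← MeasureTheory.integral_const_mul,
      ← MeasureTheory.integral_const_mul]
    rw [← integral_sub ((integrableOn_pow_mul_exp hlam (k'+1) b).const_mul _)
      (((integrableOn_pow_mul_exp hlam k' b).const_mul _).const_mul b)]
    refine setIntegral_congr_fun measurableSet_Ioi (fun x _ => ?_)
    unfold den
    rw [pow_succ]
    ring
  rw [hexp, tail_eq hlam (k'+1) b, tail_eq hlam k' b]
  -- now pure algebra
  set A := Real.exp (-(lam * b)) with hA
  set t := lam * b with ht
  have hk : (k'.factorial : ℝ) ≠ 0 := Nat.cast_ne_zero.mpr (Nat.factorial_ne_zero _)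
  have hcne : lam ≠ 0 := hlam.ne'
  have h1 : (lam ^ (k' + 1) / (k'.factorial : ℝ)) * (A * ∑ m ∈ Finset.range (k' + 2),
        (((k'+1).factorial : ℝ) / (m.factorial : ℝ)) * b ^ m * lam ^ m / lam ^ (k' + 2)) =
      (A / lam) * ∑ m ∈ Finset.range (k' + 2),
        (((k'+1).factorial : ℝ) / ((k'.factorial : ℝ) * (m.factorial : ℝ))) * t ^ m := by
    simp only [Finset.mul_sum]
    apply Finset.sum_congr rfl
    intro m hm
    have hm' : (m.factorial : ℝ) ≠ 0 := Nat.cast_ne_zero.mpr (Nat.factorial_ne_zero _)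
    rw [ht, mul_pow]
    field_simp
    ring
  have h2 : b * ((lam ^ (k' + 1) / (k'.factorial : ℝ)) * (A * ∑ m ∈ Finset.range (k' + 1),
        ((k'.factorial : ℝ) / (m.factorial : ℝ)) * b ^ m * lam ^ m / lam ^ (k' + 1))) =
      (A / lam) * ∑ m ∈ Finset.range (k' + 2), (m : ℝ) * t ^ m / (m.factorial : ℝ) := by
    conv_rhs => rw [Finset.sum_range_succ']
    simp only [Nat.cast_zero, zero_mul, pow_zero, Nat.factorial_zero, Nat.cast_one, zero_div,
      add_zero]
    simp only [Finset.mul_sum]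
    apply Finset.sum_congr rfl
    intro m hm
    have hm' : (m.factorial : ℝ) ≠ 0 := Nat.cast_ne_zero.mpr (Nat.factorial_ne_zero _)
    have hfac : ((m+1).factorial : ℝ) = ((m:ℝ) + 1) * (m.factorial : ℝ) := by
      rw [Nat.factorial_succ]; push_cast; ring
    rw [hfac, ht, mul_pow]
    push_cast
    field_simp
    ring
  rw [h1, h2, ← mul_sub, ← Finset.sum_sub_distrib]
  unfold phi
  rw [← ht, ← hA]
  have h3 : ∑ m ∈ Finset.range (k' + 2),
      ((((k'+1).factorial : ℝ) / ((k'.factorial : ℝ) * (m.factorial : ℝ))) * t ^ m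
        - (m : ℝ) * t ^ m / (m.factorial : ℝ)) =
      ∑ i ∈ Finset.range (k' + 1), ((k' : ℝ) + 1 - (i : ℝ)) * t ^ i / (i.factorial : ℝ) := by
    rw [Finset.sum_range_succ]
    have htop : (((k'+1).factorial : ℝ) / ((k'.factorial : ℝ) * (((k'+1).factorial : ℝ)))) *
        t ^ (k'+1) - ((k'+1 : ℕ) : ℝ) * t ^ (k'+1) / (((k'+1).factorial : ℝ)) = 0 := by
      have hfac : ((k'+1).factorial : ℝ) = ((k':ℝ) + 1) * (k'.factorial : ℝ) := by
        rw [Nat.factorial_succ]; push_cast; ring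
      rw [hfac]
      push_cast
      field_simp
      ring
    rw [htop, add_zero]
    apply Finset.sum_congr rfl
    intro m hm
    rw [Finset.mem_range] at hm
    have hm' : (m.factorial : ℝ) ≠ 0 := Nat.cast_ne_zero.mpr (Nat.factorial_ne_zero _)
    have hfac : ((k'+1).factorial : ℝ) = ((k':ℝ) + 1) * (k'.factorial : ℝ) := by
      rw [Nat.factorial_succ]; push_cast; ring
    rw [hfac]
    field_simp
  rw [h3]
  ring

lemma integrableOn_max_den (hlam : 0 < lam) (b : ℝ) :
    IntegrableOn (fun x => max (x - b) 0 * den k' lam x) (Ioi (0:ℝ)) := by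
  have hg : IntegrableOn (fun x : ℝ => x ^ 1 * den k' lam x + |b| * (x ^ 0 * den k' lam x))
      (Ioi (0:ℝ)) :=
    (integrableOn_pow_den (k' := k') hlam 1 0).add
      ((integrableOn_pow_den (k' := k') hlam 0 0).const_mul |b|)
  refine MeasureTheory.Integrable.mono' hg
    (((measurable_id.sub_const b).max measurable_const).mul
      (measurable_den k' lam)).aestronglyMeasurable ?_
  rw [ae_restrict_iff' measurableSet_Ioi]
  filter_upwards with x hx
  have hx0 : (0:ℝ) < x := hx
  have hden : 0 ≤ den k' lam x := den_nonneg hlam hx0.le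
  rw [Real.norm_eq_abs, abs_mul, abs_of_nonneg hden, abs_of_nonneg (le_max_right _ _)]
  have h1 : max (x - b) 0 ≤ x ^ 1 + |b| * x ^ 0 := by
    rw [pow_one, pow_zero, mul_one]
    have hab : -|b| ≤ b := neg_abs_le b
    rcases le_total (x - b) 0 with h | h
    · rw [max_eq_right h]; positivity
    · rw [max_eq_left h]; linarith
  calc max (x - b) 0 * den k' lam x ≤ (x ^ 1 + |b| * x ^ 0) * den k' lam x := by gcongr
    _ = x ^ 1 * den k' lam x + |b| * (x ^ 0 * den k' lam x) := by ring

lemma integrable_id_gamma (hlam : 0 < lam) :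
    Integrable (fun x => x) (gammaMeasure ((k' + 1 : ℕ) : ℝ) lam) := by
  rw [integrable_gamma_iff hlam]
  refine MeasureTheory.IntegrableOn.congr_fun (integrableOn_pow_den (k' := k') hlam 1 0)
    (fun x _ => ?_) measurableSet_Ioi
  rw [pow_one]

lemma integral_id_gamma (hlam : 0 < lam) :
    ∫ x, x ∂(gammaMeasure ((k' + 1 : ℕ) : ℝ) lam) = ((k' : ℝ) + 1) / lam := by
  rw [integral_gamma hlam]
  have h1 : ∫ x in Ioi (0:ℝ), x * den k' lam x = ∫ x in Ioi (0:ℝ), x ^ 1 * den k' lam x :=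
    setIntegral_congr_fun measurableSet_Ioi (fun x _ => by rw [pow_one])
  rw [h1, setIntegral_pow_den hlam 1]
  have hfac : ((k' + 1).factorial : ℝ) = ((k':ℝ) + 1) * (k'.factorial : ℝ) := by
    rw [Nat.factorial_succ]; push_cast; ring
  rw [hfac, pow_one]
  have hk : (k'.factorial : ℝ) ≠ 0 := Nat.cast_ne_zero.mpr (Nat.factorial_ne_zero _)
  field_simp

lemma integrable_max_gamma (hlam : 0 < lam) (b : ℝ) :
    Integrable (fun x => max (x - b) 0) (gammaMeasure ((k' + 1 : ℕ) : ℝ) lam) := by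
  rw [integrable_gamma_iff hlam]
  exact integrableOn_max_den hlam b

lemma integral_max_gamma (hlam : 0 < lam) {b : ℝ} (hb : 0 ≤ b) :
    ∫ x, max (x - b) 0 ∂(gammaMeasure ((k' + 1 : ℕ) : ℝ) lam) = phi k' lam b := by
  rw [integral_gamma hlam, setIntegral_max_den hlam hb]

/-- `ψ`, the function `y ↦ E[(y - Δt - X)⁺]`. -/
noncomputable def psi (k' : ℕ) (lam Δt : ℝ) (y : ℝ) : ℝ :=
  if Δt ≤ y then (y - Δt) - ((k' : ℝ) + 1) / lam + phi k' lam (y - Δt) else 0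

lemma measurable_psi (k' : ℕ) (lam Δt : ℝ) : Measurable (psi k' lam Δt) := by
  unfold psi
  exact Measurable.ite (measurableSet_le measurable_const measurable_id)
    (((measurable_id.sub_const Δt).sub_const _).add
      ((measurable_phi k' lam).comp (measurable_id.sub_const Δt))) measurable_const

lemma integrable_maxb_gamma (hlam : 0 < lam) (b : ℝ) :
    Integrable (fun x => max (b - x) 0) (gammaMeasure ((k' + 1 : ℕ) : ℝ) lam) := by
  haveI : IsProbabilityMeasure (gammaMeasure ((k' + 1 : ℕ) : ℝ) lam) :=
    isProbabilityMeasure_gammaMeasure (by positivity) hlam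
  refine MeasureTheory.Integrable.mono' (integrable_const |b|)
    ((measurable_const.sub measurable_id).max measurable_const).aestronglyMeasurable ?_
  filter_upwards [gamma_ae_pos hlam] with x hx
  rw [Real.norm_eq_abs, abs_of_nonneg (le_max_right _ _)]
  rcases le_total (b - x) 0 with h | h
  · rw [max_eq_right h]; positivity
  · rw [max_eq_left h]
    have : b - x ≤ |b| := by
      have := le_abs_self b; linarith
    linarith

lemma integral_maxb_gamma (hlam : 0 < lam) (Δt : ℝ) (y : ℝ) :
    ∫ x, max ((y - Δt) - x) 0 ∂(gammaMeasure ((k' + 1 : ℕ) : ℝ) lam) = psi k' lam Δt y := by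
  haveI : IsProbabilityMeasure (gammaMeasure ((k' + 1 : ℕ) : ℝ) lam) :=
    isProbabilityMeasure_gammaMeasure (by positivity) hlam
  unfold psi
  by_cases hb : Δt ≤ y
  · rw [if_pos hb]
    set b := y - Δt with hbdef
    have hb0 : 0 ≤ b := by simp [hbdef]; linarith
    have hpt : ∀ x : ℝ, max (b - x) 0 = (b - x) + max (x - b) 0 := by
      intro x
      rcases le_total x b with h | h
      · rw [max_eq_left (by linarith), max_eq_right (by linarith)]; ring
      · rw [max_eq_right (by linarith), max_eq_left (by linarith)]; ring
    simp_rw [hpt]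
    have hsub : Integrable (fun x : ℝ => b - x) (gammaMeasure ((k' + 1 : ℕ) : ℝ) lam) :=
      (integrable_const b).sub (integrable_id_gamma hlam)
    rw [integral_add hsub (integrable_max_gamma hlam b)]
    rw [integral_sub (integrable_const b) (integrable_id_gamma hlam),
      integral_const, integral_id_gamma hlam, integral_max_gamma hlam hb0]
    simp only [probReal_univ, smul_eq_mul, one_mul]
  · rw [if_neg hb]
    push_neg at hb
    have hz : (fun x : ℝ => max ((y - Δt) - x) 0) =ᵐ[gammaMeasure ((k' + 1 : ℕ) : ℝ) lam]
        (fun _ => (0:ℝ)) := by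
      filter_upwards [gamma_ae_pos hlam] with x hx
      rw [max_eq_right (by linarith)]
    rw [integral_congr_ae hz, integral_zero]

/-- Inner integral: `∫ |x + Δt - y| dγ₁ y`. -/
lemma inner_abs (hlam : 0 < lam) {Δt : ℝ} (hΔt : 0 ≤ Δt) (y : ℝ) :
    ∫ x, |x + Δt - y| ∂(gammaMeasure ((k' + 1 : ℕ) : ℝ) lam) =
      (((k' : ℝ) + 1) / lam + (Δt - y)) + 2 * psi k' lam Δt y := by
  haveI : IsProbabilityMeasure (gammaMeasure ((k' + 1 : ℕ) : ℝ) lam) :=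
    isProbabilityMeasure_gammaMeasure (by positivity) hlam
  have hpt : ∀ x : ℝ, |x + Δt - y| = (x + (Δt - y)) + 2 * max ((y - Δt) - x) 0 := by
    intro x
    rcases le_total (x + Δt - y) 0 with h | h
    · rw [abs_of_nonpos h, max_eq_left (by linarith)]; ring
    · rw [abs_of_nonneg h, max_eq_right (by linarith)]; ring
  simp_rw [hpt]
  have ha1 : Integrable (fun x : ℝ => x + (Δt - y)) (gammaMeasure ((k' + 1 : ℕ) : ℝ) lam) :=
    (integrable_id_gamma hlam).add (integrable_const (Δt - y))
  have ha2 : Integrable (fun x : ℝ => 2 * max ((y - Δt) - x) 0)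
      (gammaMeasure ((k' + 1 : ℕ) : ℝ) lam) :=
    (integrable_maxb_gamma hlam (y - Δt)).const_mul 2
  rw [integral_add ha1 ha2]
  rw [integral_add (integrable_id_gamma hlam) (integrable_const (Δt - y)),
    integral_id_gamma hlam, integral_const, MeasureTheory.integral_const_mul,
    integral_maxb_gamma hlam Δt y]
  simp only [probReal_univ, smul_eq_mul, one_mul]

lemma setIntegral_Ioi_shift (g : ℝ → ℝ) (c : ℝ) :
    ∫ y in Ioi c, g y = ∫ u in Ioi (0:ℝ), g (u + c) := by
  rw [← integral_indicator measurableSet_Ioi, ← integral_indicator measurableSet_Ioi,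
    ← integral_add_right_eq_self (fun y => (Ioi c).indicator g y) c]
  congr 1
  funext u
  by_cases hu : 0 < u
  · rw [indicator_of_mem (by simpa using hu : u + c ∈ Ioi c),
      indicator_of_mem (by simpa using hu : u ∈ Ioi (0:ℝ))]
  · rw [indicator_of_notMem (by simpa using hu : u + c ∉ Ioi c),
      indicator_of_notMem (by simpa using hu : u ∉ Ioi (0:ℝ))]

section Outer

variable {k' l' : ℕ} {lam1 lam2 Δt : ℝ}

lemma den_shift_sum (l' : ℕ) (lam2 Δt : ℝ) (m : ℕ) :
    ∀ u : ℝ, u ^ m * den l' lam2 (u + Δt) =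
      ∑ j ∈ Finset.range (l' + 1),
        ((l'.choose j : ℝ) * Δt ^ (l' - j) * (lam2 ^ (l' + 1) / (l'.factorial : ℝ)) *
          Real.exp (-(lam2 * Δt))) * (u ^ (j + m) * Real.exp (-(lam2 * u))) := by
  intro u
  unfold den
  rw [add_pow]
  have he : Real.exp (-(lam2 * (u + Δt))) = Real.exp (-(lam2 * u)) * Real.exp (-(lam2 * Δt)) := by
    rw [← Real.exp_add]; ring_nf
  rw [he]
  simp only [Finset.sum_mul, Finset.mul_sum, Finset.sum_div]
  apply Finset.sum_congr rfl
  intro j hj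
  rw [pow_add u j m]
  ring

lemma phi_den_shift_sum (k' l' : ℕ) (lam1 lam2 Δt : ℝ) (hlam1 : 0 < lam1) :
    ∀ u : ℝ, phi k' lam1 u * den l' lam2 (u + Δt) =
      ∑ i ∈ Finset.range (k' + 1), ∑ j ∈ Finset.range (l' + 1),
        (((k' : ℝ) + 1 - (i : ℝ)) * lam1 ^ i / (lam1 * (i.factorial : ℝ)) *
          ((l'.choose j : ℝ) * Δt ^ (l' - j) * (lam2 ^ (l' + 1) / (l'.factorial : ℝ)) *
            Real.exp (-(lam2 * Δt)))) *
          (u ^ (i + j) * Real.exp (-((lam1 + lam2) * u))) := by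
  intro u
  unfold phi den
  rw [add_pow]
  have he : Real.exp (-(lam2 * (u + Δt))) = Real.exp (-(lam2 * u)) * Real.exp (-(lam2 * Δt)) := by
    rw [← Real.exp_add]; ring_nf
  have he2 : Real.exp (-((lam1 + lam2) * u)) =
      Real.exp (-(lam1 * u)) * Real.exp (-(lam2 * u)) := by
    rw [← Real.exp_add]; ring_nf
  rw [he]
  simp only [Finset.sum_mul, Finset.mul_sum, Finset.sum_div]
  rw [Finset.sum_comm]
  apply Finset.sum_congr rfl
  intro i hi
  apply Finset.sum_congr rfl
  intro j hj
  rw [he2, pow_add u i j, mul_pow]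
  ring

lemma integrableOn_pow_den_shift (hlam2 : 0 < lam2) (m : ℕ) :
    IntegrableOn (fun u => u ^ m * den l' lam2 (u + Δt)) (Ioi (0:ℝ)) := by
  refine MeasureTheory.IntegrableOn.congr_fun ?_
    (fun u _ => (den_shift_sum l' lam2 Δt m u).symm) measurableSet_Ioi
  exact integrable_finset_sum _
    (fun j _ => (integrableOn_pow_mul_exp hlam2 (j + m) 0).const_mul _)

lemma integrableOn_phi_den_shift (hlam1 : 0 < lam1) (hlam2 : 0 < lam2) :
    IntegrableOn (fun u => phi k' lam1 u * den l' lam2 (u + Δt)) (Ioi (0:ℝ)) := by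
  have hs : 0 < lam1 + lam2 := by linarith
  refine MeasureTheory.IntegrableOn.congr_fun ?_
    (fun u _ => (phi_den_shift_sum k' l' lam1 lam2 Δt hlam1 u).symm) measurableSet_Ioi
  exact integrable_finset_sum _ (fun i _ => integrable_finset_sum _
    (fun j _ => (integrableOn_pow_mul_exp hs (i + j) 0).const_mul _))

lemma P_pow (hlam2 : 0 < lam2) (m : ℕ) :
    ∫ u in Ioi (0:ℝ), u ^ m * den l' lam2 (u + Δt) =
      ∑ j ∈ Finset.range (l' + 1),
        ((l'.choose j : ℝ) * Δt ^ (l' - j) * (lam2 ^ (l' + 1) / (l'.factorial : ℝ)) *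
          Real.exp (-(lam2 * Δt))) * (((j + m).factorial : ℝ) / lam2 ^ (j + m + 1)) := by
  rw [setIntegral_congr_fun measurableSet_Ioi (fun u _ => den_shift_sum l' lam2 Δt m u)]
  rw [integral_finset_sum _
    (fun j _ => (integrableOn_pow_mul_exp hlam2 (j + m) 0).const_mul _)]
  exact Finset.sum_congr rfl
    (fun j _ => by rw [MeasureTheory.integral_const_mul, moment0 hlam2])

lemma P_phi (hlam1 : 0 < lam1) (hlam2 : 0 < lam2) :
    ∫ u in Ioi (0:ℝ), phi k' lam1 u * den l' lam2 (u + Δt) =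
      ∑ i ∈ Finset.range (k' + 1), ∑ j ∈ Finset.range (l' + 1),
        (((k' : ℝ) + 1 - (i : ℝ)) * lam1 ^ i / (lam1 * (i.factorial : ℝ)) *
          ((l'.choose j : ℝ) * Δt ^ (l' - j) * (lam2 ^ (l' + 1) / (l'.factorial : ℝ)) *
            Real.exp (-(lam2 * Δt)))) *
          (((i + j).factorial : ℝ) / (lam1 + lam2) ^ (i + j + 1)) := by
  have hs : 0 < lam1 + lam2 := by linarith
  rw [setIntegral_congr_fun measurableSet_Ioi
    (fun u _ => phi_den_shift_sum k' l' lam1 lam2 Δt hlam1 u)]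
  rw [integral_finset_sum _ (fun i _ => integrable_finset_sum _
    (fun j _ => (integrableOn_pow_mul_exp hs (i + j) 0).const_mul _))]
  refine Finset.sum_congr rfl (fun i _ => ?_)
  rw [integral_finset_sum _
    (fun j _ => (integrableOn_pow_mul_exp hs (i + j) 0).const_mul _)]
  exact Finset.sum_congr rfl
    (fun j _ => by rw [MeasureTheory.integral_const_mul, moment0 hs])

lemma phi_zero (k' : ℕ) {lam : ℝ} (hlam : 0 < lam) : phi k' lam 0 = ((k' : ℝ) + 1) / lam := by
  unfold phi
  rw [mul_zero, neg_zero, Real.exp_zero, Finset.sum_eq_single 0]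
  · simp
    ring
  · intro i _ hi
    rw [zero_pow hi]
    simp
  · intro h; simp at h

lemma psi_eq_zero {k' : ℕ} {lam Δt : ℝ} (hlam : 0 < lam) {y : ℝ} (hy : y ≤ Δt) :
    psi k' lam Δt y = 0 := by
  unfold psi
  by_cases h : Δt ≤ y
  · rw [if_pos h]
    have : y = Δt := le_antisymm hy h
    rw [this]
    rw [sub_self, phi_zero k' hlam]
    ring
  · rw [if_neg h]

/-- The raw closed form of `∫ ψ dγ₂`. -/
lemma integral_psi_gamma2 (hlam1 : 0 < lam1) (hlam2 : 0 < lam2) (hΔt : 0 ≤ Δt) :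
    ∫ y, psi k' lam1 Δt y ∂(gammaMeasure ((l' + 1 : ℕ) : ℝ) lam2) =
      (∑ j ∈ Finset.range (l' + 1),
        ((l'.choose j : ℝ) * Δt ^ (l' - j) * (lam2 ^ (l' + 1) / (l'.factorial : ℝ)) *
          Real.exp (-(lam2 * Δt))) * (((j + 1).factorial : ℝ) / lam2 ^ (j + 1 + 1)))
      - ((k' : ℝ) + 1) / lam1 *
        (∑ j ∈ Finset.range (l' + 1),
          ((l'.choose j : ℝ) * Δt ^ (l' - j) * (lam2 ^ (l' + 1) / (l'.factorial : ℝ)) *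
            Real.exp (-(lam2 * Δt))) * (((j + 0).factorial : ℝ) / lam2 ^ (j + 0 + 1)))
      + ∑ i ∈ Finset.range (k' + 1), ∑ j ∈ Finset.range (l' + 1),
          (((k' : ℝ) + 1 - (i : ℝ)) * lam1 ^ i / (lam1 * (i.factorial : ℝ)) *
            ((l'.choose j : ℝ) * Δt ^ (l' - j) * (lam2 ^ (l' + 1) / (l'.factorial : ℝ)) *
              Real.exp (-(lam2 * Δt)))) *
            (((i + j).factorial : ℝ) / (lam1 + lam2) ^ (i + j + 1)) := by
  rw [integral_gamma hlam2 (psi k' lam1 Δt)]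
  have h1 : ∫ y in Ioi (0:ℝ), psi k' lam1 Δt y * den l' lam2 y =
      ∫ y in Ioi Δt, psi k' lam1 Δt y * den l' lam2 y := by
    rw [← integral_indicator measurableSet_Ioi, ← integral_indicator measurableSet_Ioi]
    congr 1
    funext y
    by_cases hy : Δt < y
    · rw [indicator_of_mem (by exact hy : y ∈ Ioi Δt),
        indicator_of_mem (by exact lt_of_le_of_lt hΔt hy : y ∈ Ioi (0:ℝ))]
    · push_neg at hy
      rw [indicator_of_notMem (by simpa using hy : y ∉ Ioi Δt)]
      by_cases hy0 : 0 < y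
      · rw [indicator_of_mem (by exact hy0 : y ∈ Ioi (0:ℝ)), psi_eq_zero hlam1 hy, zero_mul]
      · rw [indicator_of_notMem (by simpa using hy0 : y ∉ Ioi (0:ℝ))]
  rw [h1, setIntegral_Ioi_shift (fun y => psi k' lam1 Δt y * den l' lam2 y) Δt]
  have h2 : ∀ u ∈ Ioi (0:ℝ), psi k' lam1 Δt (u + Δt) * den l' lam2 (u + Δt) =
      u ^ 1 * den l' lam2 (u + Δt)
      - ((k' : ℝ) + 1) / lam1 * (u ^ 0 * den l' lam2 (u + Δt))
      + phi k' lam1 u * den l' lam2 (u + Δt) := by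
    intro u hu
    have hu0 : (0:ℝ) < u := hu
    unfold psi
    rw [if_pos (le_add_of_nonneg_left hu0.le), add_sub_cancel_right]
    ring
  rw [setIntegral_congr_fun measurableSet_Ioi h2]
  have hi1 := integrableOn_pow_den_shift (l' := l') (Δt := Δt) hlam2 1
  have hi0 := (integrableOn_pow_den_shift (l' := l') (Δt := Δt) hlam2 0).const_mul
    (((k' : ℝ) + 1) / lam1)
  have hiphi := integrableOn_phi_den_shift (k' := k') (l' := l') (Δt := Δt) hlam1 hlam2
  have hisub : IntegrableOn (fun u : ℝ => u ^ 1 * den l' lam2 (u + Δt)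
      - ((k' : ℝ) + 1) / lam1 * (u ^ 0 * den l' lam2 (u + Δt))) (Ioi (0:ℝ)) := hi1.sub hi0
  rw [integral_add hisub hiphi, integral_sub hi1 hi0,
    MeasureTheory.integral_const_mul, P_pow hlam2 1, P_pow hlam2 0, P_phi hlam1 hlam2]

lemma integrable_psi_gamma2 (hlam1 : 0 < lam1) (hlam2 : 0 < lam2) (hΔt : 0 ≤ Δt) :
    Integrable (psi k' lam1 Δt) (gammaMeasure ((l' + 1 : ℕ) : ℝ) lam2) := by
  haveI : IsProbabilityMeasure (gammaMeasure ((k' + 1 : ℕ) : ℝ) lam1) :=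
    isProbabilityMeasure_gammaMeasure (by positivity) hlam1
  refine MeasureTheory.Integrable.mono' (integrable_id_gamma hlam2).abs
    (measurable_psi k' lam1 Δt).aestronglyMeasurable ?_
  filter_upwards [gamma_ae_pos hlam2] with y hy
  rw [← integral_maxb_gamma hlam1 Δt y]
  have hnn : 0 ≤ ∫ x, max ((y - Δt) - x) 0 ∂(gammaMeasure ((k' + 1 : ℕ) : ℝ) lam1) :=
    integral_nonneg (fun x => le_max_right _ _)
  rw [Real.norm_eq_abs, abs_of_nonneg hnn]
  have hb : ∫ x, max ((y - Δt) - x) 0 ∂(gammaMeasure ((k' + 1 : ℕ) : ℝ) lam1) ≤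
      ∫ _, |y| ∂(gammaMeasure ((k' + 1 : ℕ) : ℝ) lam1) := by
    refine integral_mono_ae (integrable_maxb_gamma hlam1 (y - Δt)) (integrable_const |y|) ?_
    filter_upwards [gamma_ae_pos hlam1] with x hx
    have h1 : y ≤ |y| := le_abs_self y
    rcases le_total ((y - Δt) - x) 0 with h | h
    · rw [max_eq_right h]; positivity
    · rw [max_eq_left h]; linarith
  calc (∫ x, max ((y - Δt) - x) 0 ∂(gammaMeasure ((k' + 1 : ℕ) : ℝ) lam1)) ≤
      ∫ _, |y| ∂(gammaMeasure ((k' + 1 : ℕ) : ℝ) lam1) := hb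
    _ = |y| := by rw [integral_const, probReal_univ]; simp

end Outer

end Moments


section Alg

lemma choose_cast_eq (n m : ℕ) (h : m ≤ n) :
    (n.choose m : ℝ) = (n.factorial : ℝ) / ((m.factorial : ℝ) * ((n - m).factorial : ℝ)) := by
  have hcc : ((n.choose m : ℝ)) * (m.factorial : ℝ) * ((n - m).factorial : ℝ)
      = (n.factorial : ℝ) := by
    exact_mod_cast congrArg (Nat.cast : ℕ → ℝ) (Nat.choose_mul_factorial_mul_factorial h)
  have h1 : (m.factorial : ℝ) ≠ 0 := Nat.cast_ne_zero.mpr (Nat.factorial_ne_zero _)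
  have h2 : ((n - m).factorial : ℝ) ≠ 0 := Nat.cast_ne_zero.mpr (Nat.factorial_ne_zero _)
  field_simp
  linarith [hcc]

variable {k' l' : ℕ} {lam1 lam2 Δt : ℝ}

lemma alg0 (hlam2 : 0 < lam2) :
    (∑ j ∈ Finset.range (l' + 1),
      ((l'.choose j : ℝ) * Δt ^ (l' - j) * (lam2 ^ (l' + 1) / (l'.factorial : ℝ)) *
        Real.exp (-(lam2 * Δt))) * (((j + 0).factorial : ℝ) / lam2 ^ (j + 0 + 1)))
      = Real.exp (-(lam2 * Δt)) *
          ∑ j ∈ Finset.range (l' + 1), (lam2 * Δt) ^ j / (j.factorial : ℝ) := by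
  rw [Finset.mul_sum,
    ← Finset.sum_range_reflect
      (fun j => Real.exp (-(lam2 * Δt)) * ((lam2 * Δt) ^ j / (j.factorial : ℝ))) (l' + 1)]
  apply Finset.sum_congr rfl
  intro j hj
  rw [Finset.mem_range] at hj
  have hjl : j ≤ l' := Nat.lt_succ_iff.mp hj
  have hidx : l' + 1 - 1 - j = l' - j := by omega
  rw [hidx, Nat.add_zero, choose_cast_eq l' j hjl]
  have hpow : lam2 ^ (l' + 1) = lam2 ^ (j + 1) * lam2 ^ (l' - j) := by
    rw [← pow_add]; congr 1; omega
  have h2 : (lam2 * Δt) ^ (l' - j) = lam2 ^ (l' - j) * Δt ^ (l' - j) := mul_pow _ _ _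
  have hf1 : (j.factorial : ℝ) ≠ 0 := Nat.cast_ne_zero.mpr (Nat.factorial_ne_zero _)
  have hf2 : ((l' - j).factorial : ℝ) ≠ 0 := Nat.cast_ne_zero.mpr (Nat.factorial_ne_zero _)
  have hf3 : (l'.factorial : ℝ) ≠ 0 := Nat.cast_ne_zero.mpr (Nat.factorial_ne_zero _)
  have hl2 : lam2 ≠ 0 := hlam2.ne'
  rw [hpow, h2]
  field_simp
  ring

lemma alg1 (hlam2 : 0 < lam2) :
    (∑ j ∈ Finset.range (l' + 1),
      ((l'.choose j : ℝ) * Δt ^ (l' - j) * (lam2 ^ (l' + 1) / (l'.factorial : ℝ)) *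
        Real.exp (-(lam2 * Δt))) * (((j + 1).factorial : ℝ) / lam2 ^ (j + 1 + 1)))
      = Real.exp (-(lam2 * Δt)) *
          ((((l' : ℝ) + 1) / lam2 - Δt) *
            (∑ j ∈ Finset.range (l' + 1), (lam2 * Δt) ^ j / (j.factorial : ℝ))
          + Δt * (lam2 * Δt) ^ l' / (l'.factorial : ℝ)) := by
  have hl2 : lam2 ≠ 0 := hlam2.ne'
  have step1 : (∑ j ∈ Finset.range (l' + 1),
      ((l'.choose j : ℝ) * Δt ^ (l' - j) * (lam2 ^ (l' + 1) / (l'.factorial : ℝ)) *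
        Real.exp (-(lam2 * Δt))) * (((j + 1).factorial : ℝ) / lam2 ^ (j + 1 + 1)))
      = Real.exp (-(lam2 * Δt)) * ∑ j ∈ Finset.range (l' + 1),
          (((l' : ℝ) + 1) - (j : ℝ)) * (lam2 * Δt) ^ j / (lam2 * (j.factorial : ℝ)) := by
    rw [Finset.mul_sum,
      ← Finset.sum_range_reflect (fun j => Real.exp (-(lam2 * Δt)) *
        ((((l' : ℝ) + 1) - (j : ℝ)) * (lam2 * Δt) ^ j / (lam2 * (j.factorial : ℝ)))) (l' + 1)]
    apply Finset.sum_congr rfl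
    intro j hj
    rw [Finset.mem_range] at hj
    have hjl : j ≤ l' := Nat.lt_succ_iff.mp hj
    have hidx : l' + 1 - 1 - j = l' - j := by omega
    have hcast : ((l' - j : ℕ) : ℝ) = (l' : ℝ) - (j : ℝ) := by
      exact Nat.cast_sub hjl
    rw [hidx, hcast, choose_cast_eq l' j hjl]
    have hpow : lam2 ^ (l' + 1) = lam2 ^ (j + 1) * lam2 ^ (l' - j) := by
      rw [← pow_add]; congr 1; omega
    have h2 : (lam2 * Δt) ^ (l' - j) = lam2 ^ (l' - j) * Δt ^ (l' - j) := mul_pow _ _ _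
    have hfac : ((j + 1).factorial : ℝ) = ((j : ℝ) + 1) * (j.factorial : ℝ) := by
      rw [Nat.factorial_succ]; push_cast; ring
    have hf1 : (j.factorial : ℝ) ≠ 0 := Nat.cast_ne_zero.mpr (Nat.factorial_ne_zero _)
    have hf2 : ((l' - j).factorial : ℝ) ≠ 0 := Nat.cast_ne_zero.mpr (Nat.factorial_ne_zero _)
    have hf3 : (l'.factorial : ℝ) ≠ 0 := Nat.cast_ne_zero.mpr (Nat.factorial_ne_zero _)
    rw [hpow, h2, hfac]
    field_simp
    ring
  rw [step1]
  congr 1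
  have hb : ∑ j ∈ Finset.range (l' + 1), (j : ℝ) * (lam2 * Δt) ^ j / (lam2 * (j.factorial : ℝ))
      = Δt * ∑ j ∈ Finset.range l', (lam2 * Δt) ^ j / (j.factorial : ℝ) := by
    rw [Finset.sum_range_succ']
    simp only [Nat.cast_zero, zero_mul, zero_div, add_zero]
    rw [Finset.mul_sum]
    apply Finset.sum_congr rfl
    intro j _
    have hfac : ((j + 1).factorial : ℝ) = ((j : ℝ) + 1) * (j.factorial : ℝ) := by
      rw [Nat.factorial_succ]; push_cast; ring
    have hf1 : (j.factorial : ℝ) ≠ 0 := Nat.cast_ne_zero.mpr (Nat.factorial_ne_zero _)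
    rw [hfac, pow_succ]
    push_cast
    field_simp
  have hsplit : ∑ j ∈ Finset.range (l' + 1),
      (((l' : ℝ) + 1) - (j : ℝ)) * (lam2 * Δt) ^ j / (lam2 * (j.factorial : ℝ))
      = (((l' : ℝ) + 1) / lam2) *
          (∑ j ∈ Finset.range (l' + 1), (lam2 * Δt) ^ j / (j.factorial : ℝ))
        - ∑ j ∈ Finset.range (l' + 1), (j : ℝ) * (lam2 * Δt) ^ j /
            (lam2 * (j.factorial : ℝ)) := by
    rw [Finset.mul_sum, ← Finset.sum_sub_distrib]
    apply Finset.sum_congr rfl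
    intro j _
    have hf1 : (j.factorial : ℝ) ≠ 0 := Nat.cast_ne_zero.mpr (Nat.factorial_ne_zero _)
    field_simp
  rw [hsplit, hb, Finset.sum_range_succ]
  ring

lemma alg3 (hlam1 : 0 < lam1) (hlam2 : 0 < lam2) :
    (∑ i ∈ Finset.range (k' + 1), ∑ j ∈ Finset.range (l' + 1),
      (((k' : ℝ) + 1 - (i : ℝ)) * lam1 ^ i / (lam1 * (i.factorial : ℝ)) *
        ((l'.choose j : ℝ) * Δt ^ (l' - j) * (lam2 ^ (l' + 1) / (l'.factorial : ℝ)) *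
          Real.exp (-(lam2 * Δt)))) *
        (((i + j).factorial : ℝ) / (lam1 + lam2) ^ (i + j + 1)))
      = Real.exp (-(lam2 * Δt)) *
          ∑ i ∈ Finset.range (k' + 1), ∑ j ∈ Finset.range (l' + 1),
            ((i + j).choose i : ℝ) *
              ((lam2 * Δt) ^ (l' - j) / ((l' - j).factorial : ℝ)) *
                ((((k' : ℝ) + 1) - (i : ℝ)) * lam1 ^ ((i : ℤ) - 1) * lam2 ^ (j + 1) /
                  (lam1 + lam2) ^ (i + j + 1)) := by
  rw [Finset.mul_sum]
  apply Finset.sum_congr rfl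
  intro i _
  rw [Finset.mul_sum]
  apply Finset.sum_congr rfl
  intro j hj
  rw [Finset.mem_range] at hj
  have hjl : j ≤ l' := Nat.lt_succ_iff.mp hj
  have hzp : lam1 ^ ((i : ℤ) - 1) = lam1 ^ i / lam1 := by
    rw [zpow_sub₀ hlam1.ne', zpow_natCast, zpow_one]
  have hs : lam1 + lam2 ≠ 0 := by positivity
  rw [hzp, choose_cast_eq l' j hjl, choose_cast_eq (i + j) i (Nat.le_add_right i j),
    Nat.add_sub_cancel_left]
  have hpow : lam2 ^ (l' + 1) = lam2 ^ (j + 1) * lam2 ^ (l' - j) := by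
    rw [← pow_add]; congr 1; omega
  have h2 : (lam2 * Δt) ^ (l' - j) = lam2 ^ (l' - j) * Δt ^ (l' - j) := mul_pow _ _ _
  have hf1 : (j.factorial : ℝ) ≠ 0 := Nat.cast_ne_zero.mpr (Nat.factorial_ne_zero _)
  have hf2 : ((l' - j).factorial : ℝ) ≠ 0 := Nat.cast_ne_zero.mpr (Nat.factorial_ne_zero _)
  have hf3 : (l'.factorial : ℝ) ≠ 0 := Nat.cast_ne_zero.mpr (Nat.factorial_ne_zero _)
  have hf4 : (i.factorial : ℝ) ≠ 0 := Nat.cast_ne_zero.mpr (Nat.factorial_ne_zero _)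
  rw [hpow, h2]
  field_simp

end Alg

end GammaAbsAux

open GammaAbsAux in
theorem expected_abs_shifted_diff_gamma
    {Ω : Type*} [MeasurableSpace Ω] (μ : Measure Ω) [IsProbabilityMeasure μ]
    (lam1 lam2 : ℝ) (hlam1 : 0 < lam1) (hlam2 : 0 < lam2)
    (k l : ℕ) (hk : 1 ≤ k) (hl : 1 ≤ l)
    (Δt : ℝ) (hΔt : 0 ≤ Δt)
    (X Y : Ω → ℝ) (hX : Measurable X) (hY : Measurable Y)
    (hindep : IndepFun X Y μ)
    (hXlaw : μ.map X = gammaMeasure k lam1)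
    (hYlaw : μ.map Y = gammaMeasure l lam2) :
    (∫ ω, |X ω + Δt - Y ω| ∂μ) =
      ((k : ℝ) / lam1 - (l : ℝ) / lam2 + Δt) *
        (1 - 2 * Real.exp (-lam2 * Δt) *
          ∑ j ∈ Finset.range l, (lam2 * Δt) ^ j / (Nat.factorial j : ℝ)) +
      2 * Real.exp (-lam2 * Δt) *
        ((∑ i ∈ Finset.range k, ∑ j ∈ Finset.range l,
            ((i + j).choose i : ℝ) *
              ((lam2 * Δt) ^ (l - 1 - j) / (Nat.factorial (l - 1 - j) : ℝ)) *
                (((k : ℝ) - (i : ℝ)) * lam1 ^ ((i : ℤ) - 1) * lam2 ^ (j + 1) /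
                  (lam1 + lam2) ^ (i + j + 1))) +
          Δt * (lam2 * Δt) ^ (l - 1) / (Nat.factorial (l - 1) : ℝ)) := by
  obtain ⟨k', rfl⟩ : ∃ k'', k = k'' + 1 := ⟨k - 1, by omega⟩
  obtain ⟨l', rfl⟩ : ∃ l'', l = l'' + 1 := ⟨l - 1, by omega⟩
  clear hk hl
  haveI hP1 : IsProbabilityMeasure (gammaMeasure ((k' + 1 : ℕ) : ℝ) lam1) :=
    isProbabilityMeasure_gammaMeasure (by positivity) hlam1
  haveI hP2 : IsProbabilityMeasure (gammaMeasure ((l' + 1 : ℕ) : ℝ) lam2) :=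
    isProbabilityMeasure_gammaMeasure (by positivity) hlam2
  set ρ : Measure (ℝ × ℝ) :=
    (gammaMeasure ((l' + 1 : ℕ) : ℝ) lam2).prod (gammaMeasure ((k' + 1 : ℕ) : ℝ) lam1) with hρ
  have hmap : μ.map (fun ω => (Y ω, X ω)) = ρ := by
    rw [hρ, ← hYlaw, ← hXlaw]
    exact (indepFun_iff_map_prod_eq_prod_map_map hY.aemeasurable hX.aemeasurable).mp
      hindep.symm
  have hTmeas : Measurable (fun p : ℝ × ℝ => |p.2 + Δt - p.1|) :=
    ((measurable_snd.add_const Δt).sub measurable_fst).abs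
  have hstep1 : (∫ ω, |X ω + Δt - Y ω| ∂μ) = ∫ p, |p.2 + Δt - p.1| ∂ρ := by
    rw [← hmap, integral_map (hY.prodMk hX).aemeasurable hTmeas.aestronglyMeasurable]
  have hI1 : Integrable (fun p : ℝ × ℝ => |p.1|) ρ := by
    have hmapfst : ρ.map Prod.fst = gammaMeasure ((l' + 1 : ℕ) : ℝ) lam2 := by
      rw [hρ, Measure.map_fst_prod, measure_univ, one_smul]
    have habs : Integrable (fun y : ℝ => |y|) (ρ.map Prod.fst) := by
      rw [hmapfst]; exact (integrable_id_gamma hlam2).abs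
    exact (integrable_map_measure
      (by rw [hmapfst]; exact (measurable_abs).aestronglyMeasurable)
      measurable_fst.aemeasurable).mp habs
  have hI2 : Integrable (fun p : ℝ × ℝ => |p.2|) ρ := by
    have hmapsnd : ρ.map Prod.snd = gammaMeasure ((k' + 1 : ℕ) : ℝ) lam1 := by
      rw [hρ, Measure.map_snd_prod, measure_univ, one_smul]
    have habs : Integrable (fun y : ℝ => |y|) (ρ.map Prod.snd) := by
      rw [hmapsnd]; exact (integrable_id_gamma hlam1).abs
    exact (integrable_map_measure
      (by rw [hmapsnd]; exact (measurable_abs).aestronglyMeasurable)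
      measurable_snd.aemeasurable).mp habs
  have hg : Integrable (fun p : ℝ × ℝ => |p.1| + (|p.2| + Δt)) ρ :=
    hI1.add (hI2.add (integrable_const Δt))
  have hTint : Integrable (fun p : ℝ × ℝ => |p.2 + Δt - p.1|) ρ := by
    refine Integrable.mono' hg hTmeas.aestronglyMeasurable ?_
    filter_upwards with p
    rw [Real.norm_eq_abs, abs_abs]
    calc |p.2 + Δt - p.1| ≤ |p.2 + Δt| + |p.1| := abs_sub _ _
      _ ≤ (|p.2| + |Δt|) + |p.1| := by gcongr; exact abs_add_le _ _
      _ = |p.1| + (|p.2| + Δt) := by rw [abs_of_nonneg hΔt]; ring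
  rw [hstep1, hρ, MeasureTheory.integral_prod _ (by rw [← hρ]; exact hTint)]
  simp_rw [inner_abs hlam1 hΔt]
  have hy1b : Integrable (fun y : ℝ => Δt - y) (gammaMeasure ((l' + 1 : ℕ) : ℝ) lam2) :=
    (integrable_const Δt).sub (integrable_id_gamma hlam2)
  have hy1 : Integrable (fun y : ℝ => ((k' : ℝ) + 1) / lam1 + (Δt - y))
      (gammaMeasure ((l' + 1 : ℕ) : ℝ) lam2) :=
    (integrable_const _).add hy1b
  have hy2 : Integrable (fun y : ℝ => 2 * psi k' lam1 Δt y)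
      (gammaMeasure ((l' + 1 : ℕ) : ℝ) lam2) :=
    (integrable_psi_gamma2 hlam1 hlam2 hΔt).const_mul 2
  rw [integral_add hy1 hy2,
    integral_add (integrable_const _) hy1b,
    integral_sub (integrable_const Δt) (integrable_id_gamma hlam2),
    integral_const, integral_const, integral_id_gamma hlam2,
    MeasureTheory.integral_const_mul, integral_psi_gamma2 hlam1 hlam2 hΔt]
  simp only [probReal_univ, smul_eq_mul, one_mul]
  rw [alg0 hlam2, alg1 hlam2, alg3 hlam1 hlam2]
  simp only [Nat.add_sub_cancel, neg_mul]
  push_cast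
  ring
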